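/- Let F be a field and Γ a commutative additive monoid with bounded decompositions. Let C be an F-coalgebra with comultiplication Δ and counit ε, graded by Γ (C = ⊕_{γ∈Γ} C_γ as an internal direct sum of subspaces) with Δ respecting the grading (Δ(C_γ) ⊆ Σ_{α+β=γ} C_α ⊗ C_β for every γ). Suppose there is an element g ∈ C with C_0 = F·g and Δ(g) = g ⊗ g. Then every nonzero coideal I of C (i.e. every nonzero subspace I with Δ(I) ⊆ C ⊗ I + I ⊗ C) contains a nonzero element x satisfying Δ(x) = x ⊗ g + g ⊗ x − ε(x)·(g ⊗ g). -/

import Mathlib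

open TensorProduct


/-- The set of lengths of decompositions of `γ` into nonzero summands. -/
def auxL {Γ : Type*} [AddCommMonoid Γ] (γ : Γ) : Set ℕ :=
  {k | ∃ l : List Γ, (∀ x ∈ l, x ≠ 0) ∧ l.sum = γ ∧ l.length = k}

theorem auxL_nonempty {Γ : Type*} [AddCommMonoid Γ] (γ : Γ) : (auxL γ).Nonempty := by
  by_cases h : γ = 0
  · exact ⟨0, [], by simp, by simp [h], rfl⟩
  · exact ⟨1, [γ], by simpa using h, by simp, rfl⟩

theorem aux_add_eq_zero {Γ : Type*} [AddCommMonoid Γ]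
    (hbdd : ∀ γ : Γ, γ ≠ 0 → ∃ h : ℕ, ∀ l : List Γ,
      (∀ x ∈ l, x ≠ 0) → l.sum = γ → l.length ≤ h)
    {α β : Γ} (h : α + β = 0) : α = 0 := by
  by_contra hα
  have hβ : β ≠ 0 := by rintro rfl; simp at h; exact hα h
  obtain ⟨b, hb⟩ := hbdd α hα
  have key : ∀ n : ℕ, (α :: (List.replicate n α ++ List.replicate n β)).length ≤ b := by
    intro n
    refine hb _ ?_ ?_
    · intro x hx
      simp only [List.mem_cons, List.mem_append, List.mem_replicate] at hx
      rcases hx with rfl | ⟨_, rfl⟩ | ⟨_, rfl⟩ <;> assumption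
    · simp only [List.sum_cons, List.sum_append, List.sum_replicate, smul_zero]
      rw [← smul_add, h, smul_zero, add_zero]
  have := key (b+1)
  simp at this
  omega

theorem auxL_zero {Γ : Type*} [AddCommMonoid Γ]
    (hbdd : ∀ γ : Γ, γ ≠ 0 → ∃ h : ℕ, ∀ l : List Γ,
      (∀ x ∈ l, x ≠ 0) → l.sum = γ → l.length ≤ h) :
    auxL (0 : Γ) = {0} := by
  ext k
  simp only [Set.mem_singleton_iff, auxL, Set.mem_setOf_eq]
  constructor
  · rintro ⟨l, hne, hsum, rfl⟩
    match l with
    | [] => rfl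
    | a :: t =>
      exfalso
      apply hne a (by simp)
      exact aux_add_eq_zero hbdd (by simpa using hsum)
  · rintro rfl; exact ⟨[], by simp, by simp, rfl⟩

theorem auxL_bddAbove {Γ : Type*} [AddCommMonoid Γ]
    (hbdd : ∀ γ : Γ, γ ≠ 0 → ∃ h : ℕ, ∀ l : List Γ,
      (∀ x ∈ l, x ≠ 0) → l.sum = γ → l.length ≤ h) (γ : Γ) :
    BddAbove (auxL γ) := by
  by_cases h : γ = 0
  · subst h; rw [auxL_zero hbdd]; exact bddAbove_singleton
  · obtain ⟨b, hb⟩ := hbdd γ h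
    exact ⟨b, by rintro k ⟨l, hne, hsum, rfl⟩; exact hb l hne hsum⟩

/-- The height of `γ` : the largest number of nonzero summands in a decomposition. -/
noncomputable def auxd {Γ : Type*} [AddCommMonoid Γ] (γ : Γ) : ℕ := sSup (auxL γ)

theorem auxd_zero {Γ : Type*} [AddCommMonoid Γ]
    (hbdd : ∀ γ : Γ, γ ≠ 0 → ∃ h : ℕ, ∀ l : List Γ,
      (∀ x ∈ l, x ≠ 0) → l.sum = γ → l.length ≤ h) :
    auxd (0 : Γ) = 0 := by
  rw [auxd, auxL_zero hbdd, csSup_singleton]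

theorem auxd_pos {Γ : Type*} [AddCommMonoid Γ]
    (hbdd : ∀ γ : Γ, γ ≠ 0 → ∃ h : ℕ, ∀ l : List Γ,
      (∀ x ∈ l, x ≠ 0) → l.sum = γ → l.length ≤ h)
    {γ : Γ} (h : γ ≠ 0) : 1 ≤ auxd γ :=
  le_csSup (auxL_bddAbove hbdd γ) ⟨[γ], by simpa using h, by simp, rfl⟩

theorem auxd_superadd {Γ : Type*} [AddCommMonoid Γ]
    (hbdd : ∀ γ : Γ, γ ≠ 0 → ∃ h : ℕ, ∀ l : List Γ,
      (∀ x ∈ l, x ≠ 0) → l.sum = γ → l.length ≤ h)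
    (α β : Γ) : auxd α + auxd β ≤ auxd (α + β) := by
  obtain ⟨la, hla, hsa, hlena⟩ :=
    Nat.sSup_mem (auxL_nonempty α) (auxL_bddAbove hbdd α)
  obtain ⟨lb, hlb, hsb, hlenb⟩ :=
    Nat.sSup_mem (auxL_nonempty β) (auxL_bddAbove hbdd β)
  refine le_csSup (auxL_bddAbove hbdd _) ⟨la ++ lb, ?_, ?_, ?_⟩
  · intro x hx; rcases List.mem_append.1 hx with h | h
    exacts [hla x h, hlb x h]
  · simp [hsa, hsb]
  · simp [hlena, hlenb, auxd]

theorem aux_tensor_inj {F C D : Type*} [Field F] [AddCommGroup C] [Module F C]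
    [AddCommGroup D] [Module F D] (π : C →ₗ[F] D) (U : Submodule F C)
    (hinj : ∀ u ∈ U, π u = 0 → u = 0)
    (w : C ⊗[F] C) (hw : w ∈ Submodule.map₂ (TensorProduct.mk F C C) U U)
    (h0 : TensorProduct.map π π w = 0) : w = 0 := by
  rw [TensorProduct.map₂_eq_range_lift_comp_mapIncl, TensorProduct.lift_mk,
    LinearMap.id_comp] at hw
  obtain ⟨w', rfl⟩ := hw
  set f : U →ₗ[F] D := π ∘ₗ U.subtype with hf
  have hfinj : Function.Injective f := by
    intro u v huv
    have : ((u : C) - v) ∈ U := sub_mem u.2 v.2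
    have h2 : π ((u : C) - v) = 0 := by
      simp only [map_sub]
      simpa [hf] using congrArg (fun z => z - f v) huv
    have := hinj _ this h2
    exact Subtype.ext (by rw [sub_eq_zero] at this; exact this)
  have hmap : Function.Injective (TensorProduct.map f f) := by
    rw [← LinearMap.rTensor_comp_lTensor]
    exact (Module.Flat.rTensor_preserves_injective_linearMap f hfinj).comp
      (Module.Flat.lTensor_preserves_injective_linearMap f hfinj)
  have hcomp : TensorProduct.map π π ((TensorProduct.mapIncl U U) w') =
      TensorProduct.map f f w' := by
    rw [hf, TensorProduct.mapIncl, ← LinearMap.comp_apply, ← TensorProduct.map_comp]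
  have : w' = 0 := hmap (by rw [← hcomp, h0, map_zero])
  rw [this, map_zero]

theorem aux_span_tmul_left {F C : Type*} [Field F] [AddCommGroup C] [Module F C]
    (g : C) (q : Submodule F C) {y : C ⊗[F] C}
    (h : y ∈ Submodule.map₂ (TensorProduct.mk F C C) (Submodule.span F {g}) q) :
    ∃ a ∈ q, y = g ⊗ₜ[F] a := by
  have hle : Submodule.map₂ (TensorProduct.mk F C C) (Submodule.span F {g}) q ≤
      Submodule.map (TensorProduct.mk F C C g) q := by
    refine Submodule.map₂_le.2 fun s hs b hb => ?_
    obtain ⟨c, rfl⟩ := Submodule.mem_span_singleton.1 hs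
    refine ⟨c • b, q.smul_mem c hb, ?_⟩
    simp [TensorProduct.tmul_smul, TensorProduct.smul_tmul]
  obtain ⟨a, ha, rfl⟩ := hle h
  exact ⟨a, ha, rfl⟩

theorem aux_span_tmul_right {F C : Type*} [Field F] [AddCommGroup C] [Module F C]
    (g : C) (p : Submodule F C) {y : C ⊗[F] C}
    (h : y ∈ Submodule.map₂ (TensorProduct.mk F C C) p (Submodule.span F {g})) :
    ∃ b ∈ p, y = b ⊗ₜ[F] g := by
  have hle : Submodule.map₂ (TensorProduct.mk F C C) p (Submodule.span F {g}) ≤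
      Submodule.map ((TensorProduct.mk F C C).flip g) p := by
    refine Submodule.map₂_le.2 fun b hb s hs => ?_
    obtain ⟨c, rfl⟩ := Submodule.mem_span_singleton.1 hs
    refine ⟨c • b, p.smul_mem c hb, ?_⟩
    simp [TensorProduct.tmul_smul, TensorProduct.smul_tmul]
  obtain ⟨b, hb, rfl⟩ := hle h
  exact ⟨b, hb, rfl⟩


/-- Let `Γ` be a commutative additive monoid with bounded
decompositions and `C` an `F`-coalgebra graded by `Γ` with `Δ` respecting the grading,
and suppose `C_0 = F·g` for a group-like element `g` (`Δ(g) = g ⊗ g`). Then every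
nonzero coideal `I` of `C` contains a nonzero element `x` with
`Δ(x) = x ⊗ g + g ⊗ x − ε(x)·(g ⊗ g)`. -/
theorem statement16 (F : Type*) [Field F]
    (Γ : Type*) [AddCommMonoid Γ] [DecidableEq Γ]
    -- `Γ` has bounded decompositions
    (hbdd : ∀ γ : Γ, γ ≠ 0 → ∃ h : ℕ, ∀ l : List Γ,
      (∀ x ∈ l, x ≠ 0) → l.sum = γ → l.length ≤ h)
    (C : Type*) [AddCommGroup C] [Module F C] [Coalgebra F C]
    (𝒞 : Γ → Submodule F C)
    (hinternal : DirectSum.IsInternal 𝒞)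
    -- `Δ` respects the grading
    (hΔ : ∀ γ : Γ, ∀ x ∈ 𝒞 γ, Coalgebra.comul x ∈
      ⨆ p : {p : Γ × Γ // p.1 + p.2 = γ},
        Submodule.map₂ (TensorProduct.mk F C C) (𝒞 (p : Γ × Γ).1) (𝒞 (p : Γ × Γ).2))
    (g : C) (hg0 : 𝒞 0 = Submodule.span F {g})
    (hgrp : Coalgebra.comul g = g ⊗ₜ[F] g)
    (I : Submodule F C) (hI : I ≠ ⊥)
    -- `I` is a coideal: `Δ(I) ⊆ C ⊗ I + I ⊗ C`
    (hcoideal : ∀ x ∈ I, Coalgebra.comul x ∈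
      Submodule.map₂ (TensorProduct.mk F C C) ⊤ I ⊔
        Submodule.map₂ (TensorProduct.mk F C C) I ⊤) :
    ∃ x ∈ I, x ≠ 0 ∧ Coalgebra.comul x =
      x ⊗ₜ[F] g + g ⊗ₜ[F] x - (Coalgebra.counit x : F) • (g ⊗ₜ[F] g) := by
  classical
  -- the two counit-contraction maps
  set E₁ : C ⊗[F] C →ₗ[F] C :=
    (TensorProduct.lid F C).toLinearMap ∘ₗ LinearMap.rTensor C Coalgebra.counit with hE₁def
  set E₂ : C ⊗[F] C →ₗ[F] C :=
    (TensorProduct.rid F C).toLinearMap ∘ₗ LinearMap.lTensor C Coalgebra.counit with hE₂def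
  have hE₁tmul : ∀ a b : C, E₁ (a ⊗ₜ[F] b) = (Coalgebra.counit a : F) • b := by
    intro a b; simp [hE₁def]
  have hE₂tmul : ∀ a b : C, E₂ (a ⊗ₜ[F] b) = (Coalgebra.counit b : F) • a := by
    intro a b; simp [hE₂def]
  have hE₁comul : ∀ a : C, E₁ (Coalgebra.comul a) = a := by
    intro a
    simp [hE₁def, Coalgebra.rTensor_counit_comul]
  have hE₂comul : ∀ a : C, E₂ (Coalgebra.comul a) = a := by
    intro a
    simp [hE₂def, Coalgebra.lTensor_counit_comul]
  -- g spans the zero component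
  have hgmem : g ∈ 𝒞 0 := by rw [hg0]; exact Submodule.mem_span_singleton_self g
  -- the filtration
  set Fil : ℕ → Submodule F C := fun n => ⨆ γ : Γ, ⨆ _ : auxd γ ≤ n, 𝒞 γ with hFildef
  have hFil_le : ∀ (γ : Γ) (n : ℕ), auxd γ ≤ n → 𝒞 γ ≤ Fil n := by
    intro γ n h
    exact le_iSup₂ (f := fun (γ : Γ) (_ : auxd γ ≤ n) => 𝒞 γ) γ h
  have hFil_mono : ∀ m n : ℕ, m ≤ n → Fil m ≤ Fil n := by
    intro m n hmn
    exact iSup₂_le fun γ h => hFil_le γ n (h.trans hmn)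
  have hFil_disj : ∀ (γ : Γ) (m : ℕ), m < auxd γ → Disjoint (𝒞 γ) (Fil m) := by
    intro γ m hm
    have h1 : Fil m ≤ ⨆ β ∈ {β : Γ | β ≠ γ}, 𝒞 β := by
      refine iSup₂_le fun β hβ => ?_
      refine le_iSup₂ (f := fun (β : Γ) (_ : β ∈ {β : Γ | β ≠ γ}) => 𝒞 β) β ?_
      rintro rfl
      omega
    exact (hinternal.submodule_iSupIndep.disjoint_biSup
      (by simp : γ ∉ {β : Γ | β ≠ γ})).mono_right h1
  have hFil0 : Fil 0 = 𝒞 0 := by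
    refine le_antisymm (iSup₂_le fun γ h => ?_) (hFil_le 0 0 (by rw [auxd_zero hbdd]))
    have : γ = 0 := by
      by_contra hne
      have := auxd_pos hbdd hne
      omega
    rw [this]
  have hgFil : ∀ n, g ∈ Fil n := fun n =>
    hFil_mono 0 n (Nat.zero_le n) (hFil0 ▸ hgmem)
  -- every element lies in some filtration step
  have hFil_exhaust : ∀ y : C, ∃ n, y ∈ Fil n := by
    intro y
    have htop : (⊤ : Submodule F C) ≤ ⨆ n, Fil n := by
      rw [← hinternal.submodule_iSup_eq_top]
      exact iSup_le fun γ => (hFil_le γ (auxd γ) le_rfl).trans (le_iSup Fil (auxd γ))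
    have hmono : Monotone Fil := fun _ _ h => hFil_mono _ _ h
    have hdir : Directed (· ≤ ·) Fil := hmono.directed_le
    exact (Submodule.mem_iSup_of_directed Fil hdir).1 (htop Submodule.mem_top)
  -- E₁ and E₂ map `map₂ p q` into `q` resp. `p`
  have hE₁map : ∀ p q : Submodule F C,
      Submodule.map E₁ (Submodule.map₂ (TensorProduct.mk F C C) p q) ≤ q := by
    intro p q
    rw [Submodule.map_le_iff_le_comap]
    exact Submodule.map₂_le.2 fun a _ b hb => by
      simpa [hE₁tmul] using q.smul_mem _ hb
  have hE₂map : ∀ p q : Submodule F C,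
      Submodule.map E₂ (Submodule.map₂ (TensorProduct.mk F C C) p q) ≤ p := by
    intro p q
    rw [Submodule.map_le_iff_le_comap]
    exact Submodule.map₂_le.2 fun a ha b _ => by
      simpa [hE₂tmul] using p.smul_mem _ ha
  -- g is nonzero
  have hgne : g ≠ 0 := by
    intro hg
    have h0bot : 𝒞 0 = ⊥ := by rw [hg0, hg, Submodule.span_zero_singleton]
    have hbot : ∀ γ : Γ, 𝒞 γ = ⊥ := by
      intro γ
      by_cases hγ : γ = 0
      · rw [hγ]; exact h0bot
      refine (Submodule.eq_bot_iff _).2 fun x hx => ?_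
      have hmem := hΔ γ x hx
      have hfil : Coalgebra.comul x ∈ Submodule.comap E₁ (Fil (auxd γ - 1)) := by
        refine (iSup_le fun p => ?_ : _ ≤ Submodule.comap E₁ (Fil (auxd γ - 1))) hmem
        obtain ⟨⟨α, β⟩, hp⟩ := p
        refine Submodule.map₂_le.2 fun a ha b hb => ?_
        have ha' : a ∈ 𝒞 α := ha
        have hb' : b ∈ 𝒞 β := hb
        simp only [Submodule.mem_comap, TensorProduct.mk_apply, hE₁tmul]
        by_cases hα : α = 0
        · rw [hα, h0bot, Submodule.mem_bot] at ha'
          rw [ha']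
          simp
        · refine Submodule.smul_mem _ _ (hFil_le β _ ?_ hb')
          have h1 := auxd_superadd hbdd α β
          have h2 := auxd_pos hbdd hα
          simp only at hp
          rw [hp] at h1
          omega
      have hx2 : x ∈ Fil (auxd γ - 1) := by
        have := hE₁comul x
        rw [← this]
        exact hfil
      refine Submodule.disjoint_def.1 (hFil_disj γ (auxd γ - 1) ?_) x hx hx2
      have := auxd_pos hbdd hγ
      omega
    have htopbot : (⊤ : Submodule F C) = ⊥ := by
      rw [← hinternal.submodule_iSup_eq_top]
      exact le_bot_iff.1 (iSup_le fun γ => (hbot γ).le)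
    exact hI (le_bot_iff.1 (le_trans le_top htopbot.le))
  -- counit of g is 1
  have hεg : (Coalgebra.counit g : F) = 1 := by
    have h1 := hE₁comul g
    rw [hgrp, hE₁tmul] at h1
    have h2 : ((Coalgebra.counit g : F) - 1) • g = 0 := by
      rw [sub_smul, one_smul, h1, sub_self]
    rcases smul_eq_zero.1 h2 with h3 | h3
    · exact sub_eq_zero.1 h3
    · exact absurd h3 hgne
  -- pick the minimal filtration level meeting `I`
  have hex : ∃ n : ℕ, ∃ x : C, x ∈ I ∧ x ≠ 0 ∧ x ∈ Fil n := by
    obtain ⟨y, hyI, hyne⟩ := Submodule.exists_mem_ne_zero_of_ne_bot hI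
    obtain ⟨n, hn⟩ := hFil_exhaust y
    exact ⟨n, y, hyI, hyne, hn⟩
  obtain ⟨x, hxI, hxne, hxFil⟩ := Nat.find_spec hex
  refine ⟨x, hxI, hxne, ?_⟩
  rcases Nat.eq_zero_or_pos (Nat.find hex) with hn0 | hpos
  · -- base case : x ∈ Fil 0 = F·g
    rw [hn0] at hxFil
    rw [hFil0, hg0] at hxFil
    obtain ⟨c, hc⟩ := Submodule.mem_span_singleton.1 hxFil
    rw [← hc, map_smul, hgrp, map_smul, hεg]
    rw [TensorProduct.smul_tmul', TensorProduct.tmul_smul, smul_eq_mul, mul_one]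
    module
  · -- main case
    set n := Nat.find hex with hndef
    have hmin : ∀ y : C, y ∈ I → y ∈ Fil (n - 1) → y = 0 := by
      intro y hy hyF
      by_contra hne
      exact Nat.find_min hex (show n - 1 < n by omega) ⟨y, hy, hne, hyF⟩
    set V : Submodule F C := Fil (n - 1) with hVdef
    have hspanV : Submodule.span F {g} ≤ V := by
      rw [← hg0, ← hFil0]
      exact hFil_mono 0 (n-1) (Nat.zero_le _)
    -- Step A : decompose the comultiplication of x
    have hstepA : Coalgebra.comul x ∈
        Submodule.map₂ (TensorProduct.mk F C C) (Submodule.span F {g}) ⊤ ⊔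
          (Submodule.map₂ (TensorProduct.mk F C C) ⊤ (Submodule.span F {g}) ⊔
            Submodule.map₂ (TensorProduct.mk F C C) V V) := by
      set T := Submodule.map₂ (TensorProduct.mk F C C) (Submodule.span F {g}) ⊤ ⊔
          (Submodule.map₂ (TensorProduct.mk F C C) ⊤ (Submodule.span F {g}) ⊔
            Submodule.map₂ (TensorProduct.mk F C C) V V) with hTdef
      have hle : Fil n ≤ Submodule.comap (Coalgebra.comul (R := F) (A := C)) T := by
        refine iSup₂_le fun γ hγ => fun z hz => ?_
        refine (iSup_le fun p => ?_ : _ ≤ T) (hΔ γ z hz)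
        obtain ⟨⟨α, β⟩, hp⟩ := p
        simp only at hp
        show Submodule.map₂ (TensorProduct.mk F C C) (𝒞 α) (𝒞 β) ≤ T
        by_cases hα : α = 0
        · refine le_trans ?_ le_sup_left
          rw [hα, hg0]
          exact Submodule.map₂_le_map₂ le_rfl le_top
        by_cases hβ : β = 0
        · refine le_trans ?_ (le_trans le_sup_left le_sup_right)
          rw [hβ, hg0]
          exact Submodule.map₂_le_map₂ le_top le_rfl
        · refine le_trans ?_ (le_trans le_sup_right le_sup_right)
          have h1 := auxd_superadd hbdd α β
          have h2 := auxd_pos hbdd hα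
          have h3 := auxd_pos hbdd hβ
          rw [hp] at h1
          exact Submodule.map₂_le_map₂ (hFil_le α (n-1) (by omega)) (hFil_le β (n-1) (by omega))
      exact hle hxFil
    obtain ⟨yL, hyL, rest, hrest, hsum1⟩ := Submodule.mem_sup.1 hstepA
    obtain ⟨yR, hyR, w₀, hw₀, hsum2⟩ := Submodule.mem_sup.1 hrest
    obtain ⟨u, -, rfl⟩ := aux_span_tmul_left g ⊤ hyL
    obtain ⟨v, -, rfl⟩ := aux_span_tmul_right g ⊤ hyR
    have hcomulx : Coalgebra.comul x = g ⊗ₜ[F] u + (v ⊗ₜ[F] g + w₀) := by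
      rw [← hsum2] at hsum1; exact hsum1.symm
    -- Step B : the deviation from primitivity lies in `map₂ V V`
    have hE₁w₀ : E₁ w₀ ∈ V := hE₁map V V ⟨w₀, hw₀, rfl⟩
    have hE₂w₀ : E₂ w₀ ∈ V := hE₂map V V ⟨w₀, hw₀, rfl⟩
    have hux : u - x ∈ V := by
      have h := congrArg E₁ hcomulx
      rw [hE₁comul, map_add, map_add, hE₁tmul, hE₁tmul, hεg, one_smul] at h
      have : u - x = -((Coalgebra.counit v : F) • g + E₁ w₀) := by
        rw [h]; abel
      rw [this]
      exact neg_mem (add_mem (Submodule.smul_mem _ _ (hspanV (Submodule.mem_span_singleton_self g))) hE₁w₀)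
    have hvx : v - x ∈ V := by
      have h := congrArg E₂ hcomulx
      rw [hE₂comul, map_add, map_add, hE₂tmul, hE₂tmul, hεg, one_smul] at h
      have : v - x = -((Coalgebra.counit u : F) • g + E₂ w₀) := by
        rw [h]; abel
      rw [this]
      exact neg_mem (add_mem (Submodule.smul_mem _ _ (hspanV (Submodule.mem_span_singleton_self g))) hE₂w₀)
    set w₁ : C ⊗[F] C := Coalgebra.comul x - g ⊗ₜ[F] x - x ⊗ₜ[F] g with hw₁def
    have hw₁V : w₁ ∈ Submodule.map₂ (TensorProduct.mk F C C) V V := by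
      have heq : w₁ = g ⊗ₜ[F] (u - x) + ((v - x) ⊗ₜ[F] g + w₀) := by
        rw [hw₁def, hcomulx, TensorProduct.tmul_sub, TensorProduct.sub_tmul]
        abel
      rw [heq]
      exact add_mem (Submodule.apply_mem_map₂ _ (hspanV (Submodule.mem_span_singleton_self g)) hux)
        (add_mem (Submodule.apply_mem_map₂ _ hvx (hspanV (Submodule.mem_span_singleton_self g))) hw₀)
    -- Step C : kill the deviation modulo the coideal
    set J : Submodule F C := I ⊔ Submodule.span F {g} with hJdef
    have hgJ : g ∈ J := Submodule.mem_sup_right (Submodule.mem_span_singleton_self g)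
    have hxJ : x ∈ J := Submodule.mem_sup_left hxI
    have hπ0 : ∀ z ∈ J, J.mkQ z = 0 := fun z hz => (Submodule.Quotient.mk_eq_zero J).2 hz
    have hmapcomul : TensorProduct.map J.mkQ J.mkQ (Coalgebra.comul x) = 0 := by
      have hker : Submodule.map₂ (TensorProduct.mk F C C) ⊤ I ⊔
          Submodule.map₂ (TensorProduct.mk F C C) I ⊤ ≤
          LinearMap.ker (TensorProduct.map J.mkQ J.mkQ) := by
        refine sup_le (Submodule.map₂_le.2 fun a _ b hb => ?_)
          (Submodule.map₂_le.2 fun a ha b _ => ?_)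
        · rw [LinearMap.mem_ker]
          show TensorProduct.map J.mkQ J.mkQ (a ⊗ₜ[F] b) = 0
          rw [TensorProduct.map_tmul, hπ0 b (Submodule.mem_sup_left hb), TensorProduct.tmul_zero]
        · rw [LinearMap.mem_ker]
          show TensorProduct.map J.mkQ J.mkQ (a ⊗ₜ[F] b) = 0
          rw [TensorProduct.map_tmul, hπ0 a (Submodule.mem_sup_left ha), TensorProduct.zero_tmul]
      exact hker (hcoideal x hxI)
    have hw₁0 : TensorProduct.map J.mkQ J.mkQ w₁ = 0 := by
      rw [hw₁def, map_sub, map_sub, hmapcomul, TensorProduct.map_tmul,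
        TensorProduct.map_tmul, hπ0 g hgJ, hπ0 x hxJ]
      simp
    -- Step D : split V as F·g ⊕ U with U ∩ J = 0
    obtain ⟨W, hW⟩ := Submodule.exists_isCompl (Submodule.span F {g})
    set U : Submodule F C := V ⊓ W with hUdef
    have hVsplit : V ≤ Submodule.span F {g} ⊔ U := by
      intro y hy
      obtain ⟨s, hs, t, ht, rfl⟩ :=
        Submodule.mem_sup.1 (hW.sup_eq_top ▸ Submodule.mem_top (x := y))
      have htV : t ∈ V := by
        have : t = (s + t) - s := by abel
        rw [this]
        exact sub_mem hy (hspanV hs)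
      exact Submodule.add_mem_sup hs (Submodule.mem_inf.2 ⟨htV, ht⟩)
    have hw₁split : w₁ ∈
        Submodule.map₂ (TensorProduct.mk F C C) (Submodule.span F {g}) V ⊔
          (Submodule.map₂ (TensorProduct.mk F C C) U (Submodule.span F {g}) ⊔
            Submodule.map₂ (TensorProduct.mk F C C) U U) := by
      have h1 : Submodule.map₂ (TensorProduct.mk F C C) V V ≤
          Submodule.map₂ (TensorProduct.mk F C C) (Submodule.span F {g} ⊔ U)
            (Submodule.span F {g} ⊔ U) :=
        Submodule.map₂_le_map₂ hVsplit hVsplit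
      have h2 : Submodule.map₂ (TensorProduct.mk F C C) (Submodule.span F {g} ⊔ U)
            (Submodule.span F {g} ⊔ U) ≤
          Submodule.map₂ (TensorProduct.mk F C C) (Submodule.span F {g}) V ⊔
            (Submodule.map₂ (TensorProduct.mk F C C) U (Submodule.span F {g}) ⊔
              Submodule.map₂ (TensorProduct.mk F C C) U U) := by
        rw [Submodule.map₂_sup_left]
        refine sup_le ?_ ?_
        · exact le_trans (Submodule.map₂_le_map₂ le_rfl (sup_le hspanV inf_le_left)) le_sup_left
        · rw [Submodule.map₂_sup_right]
          exact le_sup_right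
      exact h2 (h1 hw₁V)
    obtain ⟨yA, hyA, restB, hrestB, hsumB1⟩ := Submodule.mem_sup.1 hw₁split
    obtain ⟨yB, hyB, w₂, hw₂, hsumB2⟩ := Submodule.mem_sup.1 hrestB
    obtain ⟨a, haV, rfl⟩ := aux_span_tmul_left g V hyA
    obtain ⟨b, hbU, rfl⟩ := aux_span_tmul_right g U hyB
    have hw₁eq : w₁ = g ⊗ₜ[F] a + (b ⊗ₜ[F] g + w₂) := by
      rw [← hsumB2] at hsumB1; exact hsumB1.symm
    -- U injects into C/J
    have hUinj : ∀ z ∈ U, J.mkQ z = 0 → z = 0 := by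
      intro z hz hz0
      have hzJ : z ∈ J := (Submodule.Quotient.mk_eq_zero J).1 hz0
      obtain ⟨i, hi, s, hs, rfl⟩ := Submodule.mem_sup.1 hzJ
      have hiV : i ∈ V := by
        have : i = (i + s) - s := by abel
        rw [this]
        exact sub_mem (Submodule.mem_inf.1 hz).1 (hspanV hs)
      have : i = 0 := hmin i hi hiV
      rw [this, zero_add] at hz ⊢
      have hsW : s ∈ W := (Submodule.mem_inf.1 hz).2
      exact (Submodule.disjoint_def.1 hW.disjoint) s hs hsW
    -- w₂ = 0
    have hw₂0map : TensorProduct.map J.mkQ J.mkQ w₂ = 0 := by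
      have : w₂ = w₁ - g ⊗ₜ[F] a - b ⊗ₜ[F] g := by rw [hw₁eq]; abel
      rw [this, map_sub, map_sub, hw₁0, TensorProduct.map_tmul, TensorProduct.map_tmul,
        hπ0 g hgJ]
      simp
    have hw₂0 : w₂ = 0 := aux_tensor_inj J.mkQ U hUinj w₂ hw₂ hw₂0map
    -- Step E : conclude
    have hcomul2 : Coalgebra.comul x =
        x ⊗ₜ[F] g + g ⊗ₜ[F] x + (g ⊗ₜ[F] a + b ⊗ₜ[F] g) := by
      have : Coalgebra.comul x = w₁ + g ⊗ₜ[F] x + x ⊗ₜ[F] g := by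
        rw [hw₁def]; abel
      rw [this, hw₁eq, hw₂0]
      abel
    -- apply E₂ to find b
    have hb0 : b = 0 := by
      have h := congrArg E₂ hcomul2
      rw [hE₂comul, map_add, map_add, map_add, hE₂tmul, hE₂tmul, hE₂tmul, hE₂tmul,
        hεg, one_smul, one_smul] at h
      have h4 : x + ((Coalgebra.counit x : F) • g + ((Coalgebra.counit a : F) • g + b)) =
          x + 0 := by
        rw [add_zero]
        calc x + ((Coalgebra.counit x : F) • g + ((Coalgebra.counit a : F) • g + b))
            = x + (Coalgebra.counit x : F) • g + ((Coalgebra.counit a : F) • g + b) := by abel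
          _ = x := h.symm
      have h5 := add_left_cancel h4
      have hbval : b = -((Coalgebra.counit x : F) • g + (Coalgebra.counit a : F) • g) := by
        calc b = ((Coalgebra.counit x : F) • g + ((Coalgebra.counit a : F) • g + b)) -
              ((Coalgebra.counit x : F) • g + (Coalgebra.counit a : F) • g) := by abel
          _ = -((Coalgebra.counit x : F) • g + (Coalgebra.counit a : F) • g) := by
              rw [h5, zero_sub]
      have hbspan : b ∈ Submodule.span F {g} := by
        rw [hbval]
        exact neg_mem (add_mem (Submodule.smul_mem _ _ (Submodule.mem_span_singleton_self g))
          (Submodule.smul_mem _ _ (Submodule.mem_span_singleton_self g)))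
      exact (Submodule.disjoint_def.1 hW.disjoint) b hbspan (Submodule.mem_inf.1 hbU).2
    have hcomul3 : Coalgebra.comul x = x ⊗ₜ[F] g + g ⊗ₜ[F] x + g ⊗ₜ[F] a := by
      rw [hcomul2, hb0, TensorProduct.zero_tmul]
      abel
    -- apply E₁ to find a
    have ha0 : a = -((Coalgebra.counit x : F) • g) := by
      have h := congrArg E₁ hcomul3
      rw [hE₁comul, map_add, map_add, hE₁tmul, hE₁tmul, hE₁tmul, hεg, one_smul,
        one_smul] at h
      have h4 : x + ((Coalgebra.counit x : F) • g + a) = x + 0 := by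
        rw [add_zero]
        calc x + ((Coalgebra.counit x : F) • g + a)
            = (Coalgebra.counit x : F) • g + x + a := by abel
          _ = x := h.symm
      have h5 := add_left_cancel h4
      calc a = ((Coalgebra.counit x : F) • g + a) - (Coalgebra.counit x : F) • g := by abel
        _ = -((Coalgebra.counit x : F) • g) := by rw [h5, zero_sub]
    rw [hcomul3, ha0, TensorProduct.tmul_neg, TensorProduct.tmul_smul]
    abel
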